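/- Let φ₁,…,φ₄ ∈ L^∞(𝕋), let C₁ be the entrywise conjugation and C₂ the pair-swap conjugation on H²(𝔻), and let C̃ = (1/√2)[[C₂, C₁],[C₁, −C₂]] on H²(𝔻) ⊕ H²(𝔻). If the block Toeplitz operator T_Φ = [[T_{φ₁}, T_{φ₂}],[T_{φ₃}, T_{φ₄}]] satisfies C̃ T_Φ C̃ = T_Φ*, then for all l ∈ ℤ: (φ₁+φ₄)^(2l+1) = 0 and (φ₂−φ₃)^(2l+1) = 0. -/

import Mathlib

open scoped ComplexConjugate

/-- The Hardy space `H²(𝔻)`, identified with `ℓ²(ℕ, ℂ)` via `z^n ↦ e n`. -/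
noncomputable abbrev HardySpace := lp (fun _ : ℕ => ℂ) 2

/-- The standard basis vector `e j`, corresponding to `z^j`. -/
noncomputable def e (j : ℕ) : HardySpace := lp.single 2 j 1

/-- The block operator `[[A, B],[D, E]]` on `H²(𝔻) ⊕ H²(𝔻)`. -/
noncomputable def blockOp (A B D E : HardySpace →L[ℂ] HardySpace)
    (z : HardySpace × HardySpace) : HardySpace × HardySpace :=
  (A z.1 + B z.2, D z.1 + E z.2)

/-- The conjugation `C̃ = (1/√2)[[C₂, C₁],[C₁, −C₂]]` on `H²(𝔻) ⊕ H²(𝔻)`. -/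
noncomputable def tildeConj (C₁ C₂ : HardySpace → HardySpace)
    (z : HardySpace × HardySpace) : HardySpace × HardySpace :=
  (((Real.sqrt 2 : ℂ))⁻¹ • (C₂ z.1 + C₁ z.2), ((Real.sqrt 2 : ℂ))⁻¹ • (C₁ z.1 - C₂ z.2))

private lemma sqrt2_mul_self : ((Real.sqrt 2 : ℂ)) * ((Real.sqrt 2 : ℂ)) = 2 := by
  norm_cast
  exact Real.mul_self_sqrt (by norm_num)

private lemma sqrt2_inv_mul_self :
    ((Real.sqrt 2 : ℂ))⁻¹ * ((Real.sqrt 2 : ℂ))⁻¹ = 2⁻¹ := by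
  rw [← mul_inv, sqrt2_mul_self]

private lemma magicP (x y R : ℂ)
    (h : ((Real.sqrt 2 : ℂ))⁻¹ * (conj (((Real.sqrt 2 : ℂ))⁻¹ * x) +
      conj (((Real.sqrt 2 : ℂ))⁻¹ * y)) = conj R) : x + y = 2 * R := by
  have h2 := congrArg (starRingEnd ℂ) h
  simp only [map_mul, map_add, Complex.conj_conj, map_inv₀, Complex.conj_ofReal] at h2
  linear_combination 2 * h2 - 2 * (x + y) * sqrt2_inv_mul_self

private lemma magicM (x y R : ℂ)
    (h : ((Real.sqrt 2 : ℂ))⁻¹ * (conj (((Real.sqrt 2 : ℂ))⁻¹ * x) -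
      conj (((Real.sqrt 2 : ℂ))⁻¹ * y)) = conj R) : x - y = 2 * R := by
  have h2 := congrArg (starRingEnd ℂ) h
  simp only [map_mul, map_sub, Complex.conj_conj, map_inv₀, Complex.conj_ofReal] at h2
  linear_combination 2 * h2 - 2 * (x - y) * sqrt2_inv_mul_self

private lemma aux_const (g : ℤ → ℂ)
    (hα : ∀ l : ℤ, g (l + 1) + g l = 2 * g (-l - 1))
    (hβ : ∀ l : ℤ, g (l - 1) + g l = 2 * g (-l - 1))
    (h0 : Filter.Tendsto (fun p : ℕ => g p) Filter.atTop (nhds 0)) :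
    ∀ l : ℤ, g l = 0 := by
  have h2 : ∀ l : ℤ, g (l + 1) = g (l - 1) := fun l => by
    linear_combination hα l - hβ l
  have hper : ∀ (m t : ℤ), g (m + 2 * t) = g m := by
    intro m t
    induction t using Int.induction_on with
    | zero => simp
    | succ n ih =>
      have h := h2 (m + 2 * n + 1)
      rw [show m + 2 * ((n : ℤ) + 1) = m + 2 * (n : ℤ) + 1 + 1 by ring, h,
        show m + 2 * (n : ℤ) + 1 - 1 = m + 2 * (n : ℤ) by ring]
      exact ih
    | pred n ih =>
      have h := h2 (m - 2 * n - 1)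
      rw [show m + 2 * (-(n : ℤ) - 1) = m - 2 * (n : ℤ) - 1 - 1 by ring, ← h,
        show m - 2 * (n : ℤ) - 1 + 1 = m + 2 * (-(n : ℤ)) by ring]
      exact ih
  have hconsec : ∀ l : ℤ, g (l + 1) = g l := by
    intro l
    have h1 := hα l
    have h3 : g (-l - 1) = g (l + 1) := by
      have := hper (l + 1) (-(l + 1))
      rw [show l + 1 + 2 * (-(l + 1)) = -l - 1 by ring] at this
      exact this
    rw [h3] at h1
    linear_combination -h1
  have hconst : ∀ l : ℤ, g l = g 0 := by
    intro l
    induction l using Int.induction_on with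
    | zero => rfl
    | succ n ih => rw [hconsec]; exact ih
    | pred n ih =>
      have h := hconsec (-(n : ℤ) - 1)
      rw [show -(n : ℤ) - 1 + 1 = -(n : ℤ) by ring] at h
      rw [← h]; exact ih
  have hz : g 0 = 0 := by
    have hc : Filter.Tendsto (fun p : ℕ => g p) Filter.atTop (nhds (g 0)) := by
      have : (fun p : ℕ => g p) = fun _ => g 0 := funext fun p => hconst p
      rw [this]; exact tendsto_const_nhds
    exact tendsto_nhds_unique hc h0
  intro l; rw [hconst l, hz]

private lemma tendsto_odd (c : ℤ → ℂ) (h : Summable fun k => ‖c k‖ ^ 2) :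
    Filter.Tendsto (fun p : ℕ => c (2 * (p : ℤ) + 1)) Filter.atTop (nhds 0) := by
  have h1 : Filter.Tendsto c Filter.cofinite (nhds 0) := by
    have h2 := h.tendsto_cofinite_zero
    have h3 : Filter.Tendsto (fun k => ‖c k‖) Filter.cofinite (nhds 0) := by
      have h4 := (Real.continuous_sqrt.tendsto 0).comp h2
      have h5 : (fun k => Real.sqrt (‖c k‖ ^ 2)) = fun k => ‖c k‖ :=
        funext fun k => Real.sqrt_sq (norm_nonneg _)
      simpa [h5, Function.comp_def] using h4
    exact tendsto_zero_iff_norm_tendsto_zero.mpr h3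
  have hinj : Function.Injective (fun p : ℕ => 2 * (p : ℤ) + 1) := by
    intro a b hab
    simp only at hab
    omega
  have hcof : Filter.Tendsto (fun p : ℕ => 2 * (p : ℤ) + 1) Filter.atTop Filter.cofinite := by
    rw [← Nat.cofinite_eq_atTop]
    exact hinj.tendsto_cofinite
  exact h1.comp hcof

/-- If the block Toeplitz operator `T_Φ = [[T₁,T₂],[T₃,T₄]]` is `C̃`-symmetric for
`C̃ = (1/√2)[[C₂, C₁],[C₁, −C₂]]`, with `C₁` the entrywise conjugation and `C₂` the pair-swap
conjugation, then `(φ₁+φ₄)^(2l+1) = 0` and `(φ₂−φ₃)^(2l+1) = 0` for all `l ∈ ℤ`.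
Here `cᵢ` is the (square-summable) Fourier coefficient sequence of `φᵢ`, `Tᵢ` acts on the
basis by `(Tᵢ e_j)_m = cᵢ (m-j)`, `Sᵢ` by `(Sᵢ e_j)_m = conj (cᵢ (j-m))`, and
`T_Φ* = [[S₁, S₃],[S₂, S₄]]`. -/
theorem block_toeplitz_Ctilde_symmetric_odd_vanish (c₁ c₂ c₃ c₄ : ℤ → ℂ)
    (h₁ : Summable fun k => ‖c₁ k‖ ^ 2) (h₂ : Summable fun k => ‖c₂ k‖ ^ 2)
    (h₃ : Summable fun k => ‖c₃ k‖ ^ 2) (h₄ : Summable fun k => ‖c₄ k‖ ^ 2)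
    (T₁ T₂ T₃ T₄ S₁ S₂ S₃ S₄ : HardySpace →L[ℂ] HardySpace)
    (hT₁ : ∀ j m : ℕ, (T₁ (e j)) m = c₁ ((m : ℤ) - j))
    (hT₂ : ∀ j m : ℕ, (T₂ (e j)) m = c₂ ((m : ℤ) - j))
    (hT₃ : ∀ j m : ℕ, (T₃ (e j)) m = c₃ ((m : ℤ) - j))
    (hT₄ : ∀ j m : ℕ, (T₄ (e j)) m = c₄ ((m : ℤ) - j))
    (hS₁ : ∀ j m : ℕ, (S₁ (e j)) m = conj (c₁ ((j : ℤ) - m)))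
    (hS₂ : ∀ j m : ℕ, (S₂ (e j)) m = conj (c₂ ((j : ℤ) - m)))
    (hS₃ : ∀ j m : ℕ, (S₃ (e j)) m = conj (c₃ ((j : ℤ) - m)))
    (hS₄ : ∀ j m : ℕ, (S₄ (e j)) m = conj (c₄ ((j : ℤ) - m)))
    (C₁ C₂ : HardySpace → HardySpace)
    (hC1 : ∀ (a : HardySpace) (n : ℕ), (C₁ a) n = conj (a n))
    (hC2a : ∀ (a : HardySpace) (k : ℕ), (C₂ a) (2 * k) = conj (a (2 * k + 1)))
    (hC2b : ∀ (a : HardySpace) (k : ℕ), (C₂ a) (2 * k + 1) = conj (a (2 * k)))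
    (hsym : ∀ z, tildeConj C₁ C₂ (blockOp T₁ T₂ T₃ T₄ (tildeConj C₁ C₂ z)) =
      blockOp S₁ S₃ S₂ S₄ z) :
    ∀ l : ℤ, c₁ (2 * l + 1) + c₄ (2 * l + 1) = 0 ∧ c₂ (2 * l + 1) - c₃ (2 * l + 1) = 0 := by
  -- basic facts about `e` and the conjugations
  have e_apply : ∀ j n : ℕ, (e j : HardySpace) n = if n = j then 1 else 0 := by
    intro j n
    by_cases h : n = j
    · subst h; rw [if_pos rfl]; exact lp.single_apply_self 2 n 1
    · rw [if_neg h]; exact lp.single_apply_ne 2 j 1 h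
  have hC1e : ∀ j : ℕ, C₁ (e j) = e j := by
    intro j
    apply lp.ext
    funext n
    rw [hC1, e_apply]
    split_ifs <;> simp
  have hC10 : C₁ (0 : HardySpace) = 0 := by
    apply lp.ext
    funext n
    rw [hC1]
    simp
  have hC20 : C₂ (0 : HardySpace) = 0 := by
    apply lp.ext
    funext n
    obtain ⟨m, rfl | rfl⟩ := Nat.even_or_odd' n
    · rw [hC2a]; simp
    · rw [hC2b]; simp
  have hC2even : ∀ q : ℕ, C₂ (e (2 * q)) = e (2 * q + 1) := by
    intro q
    apply lp.ext
    funext n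
    obtain ⟨m, rfl | rfl⟩ := Nat.even_or_odd' n
    · rw [hC2a, e_apply, e_apply, if_neg (by omega), if_neg (by omega), map_zero]
    · by_cases hmq : m = q
      · subst hmq; rw [hC2b, e_apply, e_apply, if_pos rfl, if_pos rfl, map_one]
      · rw [hC2b, e_apply, e_apply, if_neg (by omega), if_neg (by omega), map_zero]
  have hC2odd : ∀ q : ℕ, C₂ (e (2 * q + 1)) = e (2 * q) := by
    intro q
    apply lp.ext
    funext n
    obtain ⟨m, rfl | rfl⟩ := Nat.even_or_odd' n
    · by_cases hmq : m = q
      · subst hmq; rw [hC2a, e_apply, e_apply, if_pos rfl, if_pos rfl, map_one]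
      · rw [hC2a, e_apply, e_apply, if_neg (by omega), if_neg (by omega), map_zero]
    · rw [hC2b, e_apply, e_apply, if_neg (by omega), if_neg (by omega), map_zero]
  -- the eight scalar equations
  have key : ∀ j j' : ℕ, C₂ (e j) = e j' → ∀ k : ℕ,
      (c₁ (2 * (k : ℤ) + 1 - j') + c₂ (2 * (k : ℤ) + 1 - j) +
        (c₃ (2 * (k : ℤ) - j') + c₄ (2 * (k : ℤ) - j)) = 2 * c₁ ((j : ℤ) - 2 * k)) ∧
      (c₁ (2 * (k : ℤ) - j') + c₂ (2 * (k : ℤ) - j) +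
        (c₃ (2 * (k : ℤ) + 1 - j') + c₄ (2 * (k : ℤ) + 1 - j)) =
        2 * c₁ ((j : ℤ) - (2 * (k : ℤ) + 1))) ∧
      (c₁ (2 * (k : ℤ) - j') + c₂ (2 * (k : ℤ) - j) -
        (c₃ (2 * (k : ℤ) + 1 - j') + c₄ (2 * (k : ℤ) + 1 - j)) = 2 * c₂ ((j : ℤ) - 2 * k)) ∧
      (c₁ (2 * (k : ℤ) + 1 - j') + c₂ (2 * (k : ℤ) + 1 - j) -
        (c₃ (2 * (k : ℤ) - j') + c₄ (2 * (k : ℤ) - j)) =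
        2 * c₂ ((j : ℤ) - (2 * (k : ℤ) + 1))) := by
    intro j j' hjj' k
    have h := hsym (e j, 0)
    simp only [tildeConj, blockOp, hjj', hC1e, hC10, hC20, add_zero, sub_zero, map_smul,
      map_zero, ← smul_add, Prod.mk.injEq] at h
    obtain ⟨ha, hb⟩ := h
    refine ⟨?_, ?_, ?_, ?_⟩
    · have E := congrArg (fun f : HardySpace => f (2 * k)) ha
      simp only [lp.coeFn_smul, lp.coeFn_add, Pi.smul_apply, Pi.add_apply, smul_eq_mul,
        hC1, hC2a, hT₁, hT₂, hT₃, hT₄, hS₁] at E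
      have := magicP _ _ _ E
      push_cast at this ⊢
      linear_combination this
    · have E := congrArg (fun f : HardySpace => f (2 * k + 1)) ha
      simp only [lp.coeFn_smul, lp.coeFn_add, Pi.smul_apply, Pi.add_apply, smul_eq_mul,
        hC1, hC2b, hT₁, hT₂, hT₃, hT₄, hS₁] at E
      have := magicP _ _ _ E
      push_cast at this ⊢
      linear_combination this
    · have E := congrArg (fun f : HardySpace => f (2 * k)) hb
      simp only [lp.coeFn_smul, lp.coeFn_add, lp.coeFn_sub, Pi.smul_apply, Pi.add_apply,
        Pi.sub_apply, smul_eq_mul, hC1, hC2a, hT₁, hT₂, hT₃, hT₄, hS₂] at E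
      have := magicM _ _ _ E
      push_cast at this ⊢
      linear_combination this
    · have E := congrArg (fun f : HardySpace => f (2 * k + 1)) hb
      simp only [lp.coeFn_smul, lp.coeFn_add, lp.coeFn_sub, Pi.smul_apply, Pi.add_apply,
        Pi.sub_apply, smul_eq_mul, hC1, hC2b, hT₁, hT₂, hT₃, hT₄, hS₂] at E
      have := magicM _ _ _ E
      push_cast at this ⊢
      linear_combination this
  have key' : ∀ j j' : ℕ, C₂ (e j) = e j' → ∀ k : ℕ,
      (c₁ (2 * (k : ℤ) + 1 - j) - c₂ (2 * (k : ℤ) + 1 - j') +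
        (c₃ (2 * (k : ℤ) - j) - c₄ (2 * (k : ℤ) - j')) = 2 * c₃ ((j : ℤ) - 2 * k)) ∧
      (c₁ (2 * (k : ℤ) - j) - c₂ (2 * (k : ℤ) - j') +
        (c₃ (2 * (k : ℤ) + 1 - j) - c₄ (2 * (k : ℤ) + 1 - j')) =
        2 * c₃ ((j : ℤ) - (2 * (k : ℤ) + 1))) ∧
      (c₁ (2 * (k : ℤ) - j) - c₂ (2 * (k : ℤ) - j') -
        (c₃ (2 * (k : ℤ) + 1 - j) - c₄ (2 * (k : ℤ) + 1 - j')) = 2 * c₄ ((j : ℤ) - 2 * k)) ∧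
      (c₁ (2 * (k : ℤ) + 1 - j) - c₂ (2 * (k : ℤ) + 1 - j') -
        (c₃ (2 * (k : ℤ) - j) - c₄ (2 * (k : ℤ) - j')) =
        2 * c₄ ((j : ℤ) - (2 * (k : ℤ) + 1))) := by
    intro j j' hjj' k
    have h := hsym (0, e j)
    simp only [tildeConj, blockOp, hjj', hC1e, hC10, hC20, zero_add, add_zero, zero_sub,
      map_smul, map_neg, map_zero, smul_neg, ← sub_eq_add_neg, ← smul_sub,
      Prod.mk.injEq] at h
    obtain ⟨ha, hb⟩ := h
    refine ⟨?_, ?_, ?_, ?_⟩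
    · have E := congrArg (fun f : HardySpace => f (2 * k)) ha
      simp only [lp.coeFn_smul, lp.coeFn_add, lp.coeFn_sub, Pi.smul_apply, Pi.add_apply,
        Pi.sub_apply, smul_eq_mul, hC1, hC2a, hT₁, hT₂, hT₃, hT₄, hS₃] at E
      have := magicP _ _ _ E
      push_cast at this ⊢
      linear_combination this
    · have E := congrArg (fun f : HardySpace => f (2 * k + 1)) ha
      simp only [lp.coeFn_smul, lp.coeFn_add, lp.coeFn_sub, Pi.smul_apply, Pi.add_apply,
        Pi.sub_apply, smul_eq_mul, hC1, hC2b, hT₁, hT₂, hT₃, hT₄, hS₃] at E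
      have := magicP _ _ _ E
      push_cast at this ⊢
      linear_combination this
    · have E := congrArg (fun f : HardySpace => f (2 * k)) hb
      simp only [lp.coeFn_smul, lp.coeFn_add, lp.coeFn_sub, Pi.smul_apply, Pi.add_apply,
        Pi.sub_apply, smul_eq_mul, hC1, hC2a, hT₁, hT₂, hT₃, hT₄, hS₄] at E
      have := magicM _ _ _ E
      push_cast at this ⊢
      linear_combination this
    · have E := congrArg (fun f : HardySpace => f (2 * k + 1)) hb
      simp only [lp.coeFn_smul, lp.coeFn_add, lp.coeFn_sub, Pi.smul_apply, Pi.add_apply,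
        Pi.sub_apply, smul_eq_mul, hC1, hC2b, hT₁, hT₂, hT₃, hT₄, hS₄] at E
      have := magicM _ _ _ E
      push_cast at this ⊢
      linear_combination this
  -- functional equations for F = c₁ + c₄
  have hαF : ∀ l : ℤ, (c₁ (2 * (l + 1) + 1) + c₄ (2 * (l + 1) + 1)) +
      (c₁ (2 * l + 1) + c₄ (2 * l + 1)) =
      2 * (c₁ (2 * (-l - 1) + 1) + c₄ (2 * (-l - 1) + 1)) := by
    intro l
    obtain ⟨k, q, rfl⟩ : ∃ k q : ℕ, l = (k : ℤ) - q - 1 :=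
      ⟨(l + 1).toNat, (-(l + 1)).toNat, by omega⟩
    have A1 := (key (2 * q + 1) (2 * q) (hC2odd q) k).1
    have D1 := (key' (2 * q + 1) (2 * q) (hC2odd q) k).2.2.1
    push_cast at A1 D1 ⊢
    ring_nf at A1 D1 ⊢
    linear_combination A1 + D1
  have hβF : ∀ l : ℤ, (c₁ (2 * (l - 1) + 1) + c₄ (2 * (l - 1) + 1)) +
      (c₁ (2 * l + 1) + c₄ (2 * l + 1)) =
      2 * (c₁ (2 * (-l - 1) + 1) + c₄ (2 * (-l - 1) + 1)) := by
    intro l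
    obtain ⟨k, q, rfl⟩ : ∃ k q : ℕ, l = (k : ℤ) - q :=
      ⟨l.toNat, (-l).toNat, by omega⟩
    have A2 := (key (2 * q) (2 * q + 1) (hC2even q) k).2.1
    have D2 := (key' (2 * q) (2 * q + 1) (hC2even q) k).2.2.2
    push_cast at A2 D2 ⊢
    ring_nf at A2 D2 ⊢
    linear_combination A2 + D2
  -- functional equations for G = c₂ - c₃
  have hαG : ∀ l : ℤ, (c₂ (2 * (l + 1) + 1) - c₃ (2 * (l + 1) + 1)) +
      (c₂ (2 * l + 1) - c₃ (2 * l + 1)) =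
      2 * (c₂ (2 * (-l - 1) + 1) - c₃ (2 * (-l - 1) + 1)) := by
    intro l
    obtain ⟨k, q, rfl⟩ : ∃ k q : ℕ, l = (k : ℤ) - q - 1 :=
      ⟨(l + 1).toNat, (-(l + 1)).toNat, by omega⟩
    have B1 := (key (2 * q + 1) (2 * q) (hC2odd q) k).2.2.1
    have C1 := (key' (2 * q + 1) (2 * q) (hC2odd q) k).1
    push_cast at B1 C1 ⊢
    ring_nf at B1 C1 ⊢
    linear_combination B1 - C1
  have hβG : ∀ l : ℤ, (c₂ (2 * (l - 1) + 1) - c₃ (2 * (l - 1) + 1)) +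
      (c₂ (2 * l + 1) - c₃ (2 * l + 1)) =
      2 * (c₂ (2 * (-l - 1) + 1) - c₃ (2 * (-l - 1) + 1)) := by
    intro l
    obtain ⟨k, q, rfl⟩ : ∃ k q : ℕ, l = (k : ℤ) - q :=
      ⟨l.toNat, (-l).toNat, by omega⟩
    have B2 := (key (2 * q) (2 * q + 1) (hC2even q) k).2.2.2
    have C2 := (key' (2 * q) (2 * q + 1) (hC2even q) k).2.1
    push_cast at B2 C2 ⊢
    ring_nf at B2 C2 ⊢
    linear_combination B2 - C2
  -- limits
  have h0F : Filter.Tendsto (fun p : ℕ => c₁ (2 * (p : ℤ) + 1) + c₄ (2 * (p : ℤ) + 1))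
      Filter.atTop (nhds 0) := by
    simpa using (tendsto_odd c₁ h₁).add (tendsto_odd c₄ h₄)
  have h0G : Filter.Tendsto (fun p : ℕ => c₂ (2 * (p : ℤ) + 1) - c₃ (2 * (p : ℤ) + 1))
      Filter.atTop (nhds 0) := by
    simpa using (tendsto_odd c₂ h₂).sub (tendsto_odd c₃ h₃)
  have hF := aux_const (fun n : ℤ => c₁ (2 * n + 1) + c₄ (2 * n + 1)) hαF hβF h0F
  have hG := aux_const (fun n : ℤ => c₂ (2 * n + 1) - c₃ (2 * n + 1)) hαG hβG h0G
  intro l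
  exact ⟨hF l, hG l⟩
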